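/- Let u and v be disjoint arcs on the unit circle with length(u) ≤ length(v), suppose u crosses at least 2 of the 2α reference half-axes with |Int(u)| even, and normalize so the median half-axis of u is the positive x-axis. If v intersects the reflection of u across the x-axis (axis A_0), then v contains the right endpoint of that reflected arc (v is anticlockwise adjacent to Im_0(u)); and if v intersects the reflection of u across the axis A_1 at angle π/α, then v contains the left endpoint of that reflected arc (v is clockwise adjacent to Im_1(u)). -/

import Mathlib

noncomputable section

/-- The circle of circumference `2π`, as `ℝ / 2πℤ`. -/
abbrev Circle2pi := AddCircle (2 * Real.pi)

/-- The closed arc traversed clockwise (decreasing angle) from the angle `s`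
(its left endpoint) through angular length `ℓ`; its right endpoint is `s - ℓ`. -/
def arcSet (s ℓ : ℝ) : Set Circle2pi :=
  (fun t : ℝ => ((s - t : ℝ) : Circle2pi)) '' Set.Icc 0 ℓ

/-- `f` is a circular-arc representation of `G`: each vertex gets a (start angle, length)
pair describing a proper closed arc, and distinct vertices are adjacent iff
their arcs intersect. -/
def IsCARep {V : Type*} (G : SimpleGraph V) (f : V → ℝ × ℝ) : Prop :=
  (∀ v, 0 < (f v).2 ∧ (f v).2 < 2 * Real.pi) ∧
  ∀ u v, u ≠ v →
    (G.Adj u v ↔ (arcSet (f u).1 (f u).2 ∩ arcSet (f v).1 (f v).2).Nonempty)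

/-- `box(G) ≤ k`: `G` is the intersection of `k` interval graphs on `V`. -/
def BoxicityLE {V : Type*} (G : SimpleGraph V) (k : ℕ) : Prop :=
  ∃ I : Fin k → V → Set ℝ,
    (∀ i v, ∃ a b : ℝ, a ≤ b ∧ I i v = Set.Icc a b) ∧
    ∀ u v : V, u ≠ v → (G.Adj u v ↔ ∀ i, (I i u ∩ I i v).Nonempty)

/-- Reflection of the circle across the line through the center at angle `θ`. -/
def reflMap (θ : ℝ) : Circle2pi → Circle2pi := fun p => ((2 * θ : ℝ) : Circle2pi) - p

/-- The open sector `S_k` (numbered anticlockwise from the positive x-axis):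
points of the circle with angle strictly between `πk/α` and `π(k+1)/α`. -/
def sector (α : ℕ) (k : ℤ) : Set Circle2pi :=
  (fun t : ℝ => (t : Circle2pi)) '' Set.Ioo (Real.pi * k / α) (Real.pi * (k + 1) / α)

/-- Signed coordinate of a point of the circle when orthogonally projected onto the
line through the center at angle `θ` (identified with ℝ). -/
def projCoord (θ : ℝ) : Circle2pi → ℝ :=
  Function.Periodic.lift
    (f := fun x : ℝ => Real.cos (x - θ))
    (fun x => by simp only []; rw [show x + 2 * Real.pi - θ = (x - θ) + 2 * Real.pi by ring,
      Real.cos_add_two_pi])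


lemma coe_shift (z : ℝ) (k : ℤ) : ((z + (k:ℝ) * (2*Real.pi) : ℝ) : Circle2pi) = (z : ℝ) := by
  rw [QuotientAddGroup.eq_iff_sub_mem]
  refine AddSubgroup.mem_zmultiples_iff.mpr ⟨k, ?_⟩
  rw [zsmul_eq_mul]; ring

lemma coe_eq_coe {x y : ℝ} (h : ((x:ℝ) : Circle2pi) = (y:ℝ)) :
    ∃ k : ℤ, x = y + (k:ℝ) * (2*Real.pi) := by
  rw [QuotientAddGroup.eq_iff_sub_mem] at h
  obtain ⟨k, hk⟩ := AddSubgroup.mem_zmultiples_iff.mp h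
  exact ⟨k, by rw [zsmul_eq_mul] at hk; linarith⟩

lemma mem_arcSet_of {s ℓ z : ℝ} (k : ℤ) (h1 : s - ℓ ≤ z + (k:ℝ)*(2*Real.pi))
    (h2 : z + (k:ℝ)*(2*Real.pi) ≤ s) : ((z : ℝ) : Circle2pi) ∈ arcSet s ℓ := by
  refine ⟨s - (z + (k:ℝ)*(2*Real.pi)), ⟨by linarith, by linarith⟩, ?_⟩
  show ((s - (s - (z + (k:ℝ)*(2*Real.pi))) : ℝ) : Circle2pi) = _
  rw [show s - (s - (z + (k:ℝ)*(2*Real.pi))) = z + (k:ℝ)*(2*Real.pi) by ring, coe_shift]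

lemma reflMap_coe (θ y : ℝ) : reflMap θ ((y:ℝ) : Circle2pi) = ((2*θ - y : ℝ) : Circle2pi) :=
  (QuotientAddGroup.mk_sub _ _ _).symm

/-- Let `u`, `v` be disjoint arcs, `len(u) ≤ len(v) < π(α−1)/α`, where `u`
crosses an even number `2p ≥ 2` of half-axes with median half-axis the positive x-axis.
This normalization means the left endpoint `su` of `u` lies in `S_p` (angle in
`(πp/α, π(p+1)/α)`) and its right endpoint `su − ℓu` lies in `S_{−p}` (angle in
`(−πp/α, −π(p−1)/α)`).  If `v` meets `Im_0(u)` then `v` contains the right endpoint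
`−su` of `Im_0(u)` (anticlockwise adjacency); if `v` meets `Im_1(u)` (reflection across
the axis at angle `π/α`) then `v` contains the left endpoint `2π/α − (su − ℓu)` of
`Im_1(u)` (clockwise adjacency). -/
theorem stmt9 (α p : ℕ) (hα : 2 ≤ α) (hp : 1 ≤ p)
    (su ℓu sv ℓv : ℝ) (h0u : 0 < ℓu) (h0v : 0 < ℓv)
    (hlen : ℓu ≤ ℓv) (hv : ℓv < Real.pi * ((α : ℝ) - 1) / (α : ℝ))
    (hdisj : arcSet su ℓu ∩ arcSet sv ℓv = ∅)
    (hhead : Real.pi * (p : ℝ) / (α : ℝ) < su ∧ su < Real.pi * ((p : ℝ) + 1) / (α : ℝ))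
    (htail : -(Real.pi * (p : ℝ) / (α : ℝ)) < su - ℓu ∧
      su - ℓu < -(Real.pi * ((p : ℝ) - 1) / (α : ℝ))) :
    ((arcSet sv ℓv ∩ reflMap 0 '' arcSet su ℓu).Nonempty →
      ((-su : ℝ) : Circle2pi) ∈ arcSet sv ℓv) ∧
    ((arcSet sv ℓv ∩ reflMap (Real.pi / (α : ℝ)) '' arcSet su ℓu).Nonempty →
      ((2 * Real.pi / (α : ℝ) - (su - ℓu) : ℝ) : Circle2pi) ∈ arcSet sv ℓv) := by
  have hπ := Real.pi_pos
  have hA0 : (0:ℝ) < (α:ℝ) := by positivity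
  have hP1 : (1:ℝ) ≤ (p:ℝ) := by exact_mod_cast hp
  have e1 : Real.pi * ((p:ℝ)+1)/(α:ℝ) = Real.pi * (p:ℝ) / (α:ℝ) + Real.pi / (α:ℝ) := by
    field_simp
  have e2 : Real.pi * ((p:ℝ)-1)/(α:ℝ) = Real.pi * (p:ℝ) / (α:ℝ) - Real.pi / (α:ℝ) := by
    field_simp
  have e3 : 2 * Real.pi / (α:ℝ) = 2 * (Real.pi / (α:ℝ)) := by ring
  have hbpos : 0 < Real.pi / (α:ℝ) := by positivity
  have hb1 : Real.pi / (α:ℝ) ≤ Real.pi * (p:ℝ) / (α:ℝ) := by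
    have h0 : 0 ≤ Real.pi * ((p:ℝ)-1) / (α:ℝ) :=
      div_nonneg (mul_nonneg hπ.le (by linarith)) hA0.le
    linarith
  -- key derived facts
  have hsu : Real.pi / (α:ℝ) < su := lt_of_le_of_lt hb1 hhead.1
  have hlu_gt : su < ℓu := by
    have := htail.2; rw [e2] at this; linarith [hhead.1]
  have h_lusu : ℓu - su < su := by linarith [htail.1, hhead.1]
  -- disjointness in real coordinates
  have hdisj' : ∀ (z : ℝ) (k : ℤ), su - ℓu ≤ z → z ≤ su →
      sv - ℓv ≤ z + (k:ℝ)*(2*Real.pi) → z + (k:ℝ)*(2*Real.pi) ≤ sv → False := by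
    intro z k h1 h2 h3 h4
    have hu : ((z:ℝ) : Circle2pi) ∈ arcSet su ℓu :=
      mem_arcSet_of 0 (by push_cast; linarith) (by push_cast; linarith)
    have hvv : ((z:ℝ) : Circle2pi) ∈ arcSet sv ℓv := mem_arcSet_of k h3 h4
    exact Set.eq_empty_iff_forall_notMem.mp hdisj ((z:ℝ) : Circle2pi) ⟨hu, hvv⟩
  constructor
  · -- Part 1: reflection across A_0
    rintro ⟨x, hxv, hxu⟩
    obtain ⟨q, hq, hxq⟩ := hxu
    obtain ⟨r, hr, hq'⟩ := hq
    obtain ⟨t, ht, hxt⟩ := hxv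
    simp only [Set.mem_Icc] at hr ht
    have hxt' : ((sv - t : ℝ) : Circle2pi) = x := hxt
    have hq'' : ((su - r : ℝ) : Circle2pi) = q := hq'
    have heq : ((sv - t : ℝ) : Circle2pi) = ((2*0 - (su - r) : ℝ) : Circle2pi) := by
      rw [hxt', ← hxq, ← hq'', reflMap_coe]
    obtain ⟨k, hk⟩ := coe_eq_coe heq
    -- hk : sv - t = 2*0 - (su - r) + k*(2π)
    by_cases hcase1 : su - ℓu ≤ r - su
    · exact ((hdisj' (r - su) k hcase1 (by linarith) (by linarith) (by linarith))).elim
    · push_neg at hcase1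
      refine mem_arcSet_of k ?_ (by linarith)
      -- need : sv - ℓv ≤ -su + k*(2π), i.e. r + t ≤ ℓv
      by_contra hrt
      push_neg at hrt
      have hrtl : ℓv < r + t := by linarith
      by_cases hcase2 : su - ℓu ≤ r - su + t
      · by_cases hcase3 : r - su + t ≤ su
        · exact hdisj' (r - su + t) k hcase2 hcase3 (by linarith) (by linarith)
        · push_neg at hcase3
          exact hdisj' su k (by linarith) le_rfl (by linarith) (by linarith)
      · push_neg at hcase2
        -- ℓv < (r - su + t) + su < (su - ℓu) + su, and su < ℓu ≤ ℓv : contradiction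
        linarith
  · -- Part 2: reflection across A_1 (angle π/α)
    rintro ⟨x, hxv, hxu⟩
    obtain ⟨q, hq, hxq⟩ := hxu
    obtain ⟨r, hr, hq'⟩ := hq
    obtain ⟨t, ht, hxt⟩ := hxv
    simp only [Set.mem_Icc] at hr ht
    have hxt' : ((sv - t : ℝ) : Circle2pi) = x := hxt
    have hq'' : ((su - r : ℝ) : Circle2pi) = q := hq'
    have heq : ((sv - t : ℝ) : Circle2pi) =
        ((2*(Real.pi/(α:ℝ)) - (su - r) : ℝ) : Circle2pi) := by
      rw [hxt', ← hxq, ← hq'', reflMap_coe]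
    obtain ⟨k, hk⟩ := coe_eq_coe heq
    -- hk : sv - t = 2*(π/α) - (su - r) + k*(2π)
    by_cases hw : 2*(Real.pi/(α:ℝ)) - su + r ≤ su
    · refine ((hdisj' (2*(Real.pi/(α:ℝ)) - su + r) k ?_ hw (by linarith) (by linarith))).elim
      have h1 := htail.2; rw [e2] at h1
      have h2 := hhead.2; rw [e1] at h2
      linarith
    · push_neg at hw
      refine mem_arcSet_of k (by linarith) ?_
      -- need : (2π/α - (su - ℓu)) + k*(2π) ≤ sv, i.e. ℓu ≤ t + r
      by_contra hrt
      push_neg at hrt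
      by_cases hc2 : sv - ℓv ≤ su + (k:ℝ)*(2*Real.pi)
      · exact hdisj' su k (by linarith) le_rfl hc2 (by linarith)
      · push_neg at hc2
        -- ℓv < (w + t) - su < 2π/α + ℓu - 2su < ℓu : contradiction with ℓu ≤ ℓv
        linarith

end
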